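/- Let Λ be an even lattice of signature (2, n) with n ≥ 1, let f be an isometry of Λ, and suppose the eigenspace V of f⊗C for some eigenvalue λ has complex codimension 1 in Λ⊗C and V contains a vector x with x·x = 0 and x·x̄ > 0. Then λ = ±1, and if λ = 1 there exists a primitive vector β ∈ Λ with β² < 0 such that f acts as the identity on β^⊥ and f(β) = −β, i.e., f is the reflection r_β. -/

import Mathlib

open Matrix

lemma castdot {n : ℕ} {S : Type*} [CommRing S] (φ : ℤ →+* S)
    (M : Matrix (Fin n) (Fin n) ℤ) (v w : Fin n → ℤ) :
    φ (v ⬝ᵥ M *ᵥ w) = (fun i => φ (v i)) ⬝ᵥ (M.map φ) *ᵥ (fun i => φ (w i)) := by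
  rw [RingHom.map_dotProduct]
  congr 1
  funext i
  exact RingHom.map_mulVec φ M w i

lemma bilin_symm {n : ℕ} {S : Type*} [Field S] (M : Matrix (Fin n) (Fin n) S) (hM : M.IsSymm)
    (v w : Fin n → S) : v ⬝ᵥ M *ᵥ w = w ⬝ᵥ M *ᵥ v := by
  rw [Matrix.dotProduct_mulVec, ← hM, Matrix.vecMul_transpose, dotProduct_comm, hM]

lemma bilin_inv {n : ℕ} {S : Type*} [Field S] {F G : Matrix (Fin n) (Fin n) S}
    (h : F.transpose * G * F = G) (v w : Fin n → S) :
    (F *ᵥ v) ⬝ᵥ G *ᵥ (F *ᵥ w) = v ⬝ᵥ G *ᵥ w := by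
  rw [Matrix.mulVec_mulVec, Matrix.dotProduct_mulVec, ← Matrix.vecMul_transpose,
    Matrix.vecMul_vecMul, ← Matrix.mul_assoc, h, ← Matrix.dotProduct_mulVec]

lemma mapsubone {n : ℕ} {S : Type*} [CommRing S] (φ : ℤ →+* S) (F : Matrix (Fin n) (Fin n) ℤ) :
    (F - 1).map (φ : ℤ → S) = F.map φ - 1 := by
  ext i j
  by_cases h : i = j <;>
    simp [Matrix.map_apply, Matrix.sub_apply, Matrix.one_apply, h]

lemma mapZC {n : ℕ} (G : Matrix (Fin n) (Fin n) ℤ) :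
    G.map (Int.cast : ℤ → ℂ) = (G.map (Int.cast : ℤ → ℝ)).map Complex.ofRealHom := by
  ext i j
  simp [Matrix.map_apply]

lemma castdotRC {n : ℕ} (M : Matrix (Fin n) (Fin n) ℝ) (v w : Fin n → ℝ) :
    ((v ⬝ᵥ M *ᵥ w : ℝ) : ℂ)
      = (fun i => ((v i : ℝ) : ℂ)) ⬝ᵥ (M.map (Complex.ofRealHom)) *ᵥ (fun i => ((w i : ℝ) : ℂ)) := by
  rw [show ((v ⬝ᵥ M *ᵥ w : ℝ) : ℂ) = Complex.ofRealHom (v ⬝ᵥ M *ᵥ w) from rfl,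
    RingHom.map_dotProduct]
  congr 1
  funext i
  exact RingHom.map_mulVec _ M w i

set_option maxHeartbeats 2000000 in
lemma part2 (n : ℕ) (hn : 3 ≤ n)
    (G : Matrix (Fin n) (Fin n) ℤ) (hGsymm : G.IsSymm)
    (hGnd : G.det ≠ 0)
    (hsig_le : ∀ W : Submodule ℝ (Fin n → ℝ),
      (∀ v ∈ W, v ≠ 0 → 0 < Matrix.toBilin' (G.map (Int.cast : ℤ → ℝ)) v v) →
        Module.finrank ℝ W ≤ 2)
    (F : Matrix (Fin n) (Fin n) ℤ) (hFiso : F.transpose * G * F = G)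
    (E : Submodule ℂ (Fin n → ℂ))
    (hE : E = Module.End.eigenspace
      (Matrix.toLin' (F.map (Int.cast : ℤ → ℂ))) 1)
    (hcodim : Module.finrank ℂ E = n - 1)
    (x : Fin n → ℂ) (hxE : x ∈ E)
    (hxx : Matrix.toBilin' (G.map (Int.cast : ℤ → ℂ)) x x = 0)
    (ρ : ℝ) (hρ : 0 < ρ)
    (hxxbar : Matrix.toBilin' (G.map (Int.cast : ℤ → ℂ)) x (star x) = (ρ : ℂ)) :
    ∃ β : Fin n → ℤ,
        (∀ (m : ℤ) (v : Fin n → ℤ), β = m • v → IsUnit m) ∧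
        Matrix.toBilin' G β β < 0 ∧
        (∀ v : Fin n → ℤ, Matrix.toBilin' G β v = 0 → F.mulVec v = v) ∧
        F.mulVec β = -β := by
  classical
  set Gc : Matrix (Fin n) (Fin n) ℂ := G.map (Int.cast : ℤ → ℂ) with hGc
  set Fc : Matrix (Fin n) (Fin n) ℂ := F.map (Int.cast : ℤ → ℂ) with hFc
  set Gr : Matrix (Fin n) (Fin n) ℝ := G.map (Int.cast : ℤ → ℝ) with hGr
  set Fr : Matrix (Fin n) (Fin n) ℝ := F.map (Int.cast : ℤ → ℝ) with hFr
  set D : Matrix (Fin n) (Fin n) ℤ := F - 1 with hD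
  set Dc : Matrix (Fin n) (Fin n) ℂ := D.map (Int.cast : ℤ → ℂ) with hDc
  set Dr : Matrix (Fin n) (Fin n) ℝ := D.map (Int.cast : ℤ → ℝ) with hDr
  -- basic cast facts
  have hGrsymm : Gr.IsSymm := by
    rw [Matrix.IsSymm, hGr, ← Matrix.transpose_map, hGsymm]
  have hGcsymm : Gc.IsSymm := by
    rw [Matrix.IsSymm, hGc, ← Matrix.transpose_map, hGsymm]
  have hFisoR : Fr.transpose * Gr * Fr = Gr := by
    rw [hFr, hGr, ← Matrix.transpose_map]
    rw [show Fᵀ.map (Int.cast : ℤ → ℝ) = Fᵀ.map (Int.castRingHom ℝ) from rfl,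
      show F.map (Int.cast : ℤ → ℝ) = F.map (Int.castRingHom ℝ) from rfl,
      show G.map (Int.cast : ℤ → ℝ) = G.map (Int.castRingHom ℝ) from rfl,
      ← Matrix.map_mul, ← Matrix.map_mul, hFiso]
  have hGrnd : Gr.det ≠ 0 := by
    have h := RingHom.map_det (Int.castRingHom ℝ) G
    rw [RingHom.mapMatrix_apply] at h
    rw [hGr, show G.map (Int.cast : ℤ → ℝ) = G.map (⇑(Int.castRingHom ℝ)) from rfl, ← h,
      eq_intCast (Int.castRingHom ℝ)]
    exact_mod_cast hGnd
  have hGcnd : Gc.det ≠ 0 := by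
    have h := RingHom.map_det (Int.castRingHom ℂ) G
    rw [RingHom.mapMatrix_apply] at h
    rw [hGc, show G.map (Int.cast : ℤ → ℂ) = G.map (⇑(Int.castRingHom ℂ)) from rfl, ← h,
      eq_intCast (Int.castRingHom ℂ)]
    exact_mod_cast hGnd
  -- kernel description
  have hDcFc : Dc = Fc - 1 := mapsubone (Int.castRingHom ℂ) F
  have hDrFr : Dr = Fr - 1 := mapsubone (Int.castRingHom ℝ) F
  have hEker : E = LinearMap.ker (Matrix.toLin' Dc) := by
    rw [hE, Module.End.eigenspace_def, hDcFc, map_sub, Matrix.toLin'_one, one_smul]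
    rfl
  have hrange : Module.finrank ℂ (LinearMap.range (Matrix.toLin' Dc)) = 1 := by
    have h1 := LinearMap.finrank_range_add_finrank_ker (Matrix.toLin' Dc)
    rw [Module.finrank_fin_fun, ← hEker, hcodim] at h1
    omega
  have hDne : ∃ p : Fin n × Fin n, D p.1 p.2 ≠ 0 := by
    by_contra h
    push_neg at h
    have hzero : Dc = 0 := by
      ext i j
      rw [hDc, Matrix.map_apply, h ⟨i, j⟩]
      simp
    rw [hzero] at hrange
    rw [show Matrix.toLin' (0 : Matrix (Fin n) (Fin n) ℂ) = 0 from map_zero _,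
      LinearMap.range_zero, finrank_bot] at hrange
    omega
  obtain ⟨⟨i₀, k⟩, hik⟩ := hDne
  set ck : Fin n → ℤ := fun i => D i k with hck
  set g : ℤ := Finset.univ.gcd ck with hg
  have hgdvd : ∀ i, g ∣ ck i := fun i => Finset.gcd_dvd (Finset.mem_univ i)
  have hgne : g ≠ 0 := by
    intro h0
    rw [hg, Finset.gcd_eq_zero_iff] at h0
    exact hik (h0 i₀ (Finset.mem_univ i₀))
  set β : Fin n → ℤ := fun i => ck i / g with hβ
  have hckβ : ∀ i, ck i = g * β i := fun i => (Int.mul_ediv_cancel' (hgdvd i)).symm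
  have hβne : β ≠ 0 := by
    intro h0
    apply hik
    have h1 : β i₀ = 0 := congrFun h0 i₀
    have := hckβ i₀
    rw [h1, mul_zero] at this
    exact this
  set βr : Fin n → ℝ := fun i => ((β i : ℤ) : ℝ) with hβr
  set βc : Fin n → ℂ := fun i => ((β i : ℤ) : ℂ) with hβc
  have hβrne : βr ≠ 0 := fun h0 => hβne (funext fun i => by
    have := congrFun h0 i
    rw [hβr] at this
    simp only [Pi.zero_apply] at this ⊢
    exact_mod_cast this)
  have hβcne : βc ≠ 0 := fun h0 => hβne (funext fun i => by
    have := congrFun h0 i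
    rw [hβc] at this
    simp only [Pi.zero_apply] at this ⊢
    exact_mod_cast this)
  obtain ⟨i₁, hi₁⟩ := Function.ne_iff.mp hβne
  -- columns lie in the range; βc spans the range
  have hcolmem : ∀ j : Fin n, (fun i => ((D i j : ℤ) : ℂ)) ∈ LinearMap.range (Matrix.toLin' Dc) := by
    intro j
    refine ⟨Pi.single j 1, ?_⟩
    rw [Matrix.toLin'_apply, Matrix.mulVec_single]
    funext i
    simp [hDc, Matrix.map_apply]
  have hβcmem : βc ∈ LinearMap.range (Matrix.toLin' Dc) := by
    have h1 := hcolmem k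
    have h2 : βc = ((g : ℂ))⁻¹ • (fun i => ((D i k : ℤ) : ℂ)) := by
      funext i
      have : ((D i k : ℤ) : ℂ) = (g : ℂ) * (β i : ℂ) := by exact_mod_cast congrArg (Int.cast : ℤ → ℂ) (hckβ i)
      simp only [Pi.smul_apply, smul_eq_mul, this, hβc]
      rw [inv_mul_cancel_left₀ (by exact_mod_cast hgne)]
    rw [h2]
    exact Submodule.smul_mem _ _ h1
  have hspan : LinearMap.range (Matrix.toLin' Dc) = Submodule.span ℂ {βc} := by
    symm
    apply Submodule.eq_of_le_of_finrank_le
    · rw [Submodule.span_le, Set.singleton_subset_iff]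
      exact hβcmem
    · rw [hrange, finrank_span_singleton hβcne]
  -- every column of D is r j times βr
  set r : Fin n → ℝ := fun j => ((D i₁ j : ℤ) : ℝ) / ((β i₁ : ℤ) : ℝ) with hr
  have hi₁' : β i₁ ≠ 0 := by simpa using hi₁
  have hcol : ∀ j i, ((D i j : ℤ) : ℝ) = r j * βr i := by
    intro j i
    obtain ⟨t, ht⟩ := Submodule.mem_span_singleton.mp (hspan ▸ hcolmem j)
    have hβi₁ : ((β i₁ : ℤ) : ℂ) ≠ 0 := by exact_mod_cast hi₁'
    have h1 := congrFun ht i₁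
    simp only [Pi.smul_apply, smul_eq_mul, hβc] at h1
    have h2 := congrFun ht i
    simp only [Pi.smul_apply, smul_eq_mul, hβc] at h2
    have ht' : t = ((r j : ℝ) : ℂ) := by
      rw [hr]
      push_cast
      field_simp
      linear_combination h1
    have goal' : ((D i j : ℤ) : ℂ) = ((r j * βr i : ℝ) : ℂ) := by
      rw [← h2, ht']
      push_cast [hβr]
      ring
    exact_mod_cast goal'
  have hDrw : ∀ w : Fin n → ℝ, Dr *ᵥ w = (∑ j, r j * w j) • βr := by
    intro w
    funext i
    simp only [Matrix.mulVec, dotProduct, Pi.smul_apply, smul_eq_mul]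
    conv_rhs => rw [Finset.sum_mul]
    apply Finset.sum_congr rfl
    intro j _
    rw [show Dr i j = ((D i j : ℤ) : ℝ) from rfl, hcol j i]
    ring
  -- real and imaginary parts of x lie in the fixed space
  set u : Fin n → ℝ := fun i => (x i).re with hu
  set v : Fin n → ℝ := fun i => (x i).im with hv
  have hFcx : Fc *ᵥ x = x := by
    have h := (Module.End.mem_eigenspace_iff).mp (hE ▸ hxE)
    rwa [Matrix.toLin'_apply, one_smul] at h
  have hFru : Fr *ᵥ u = u := by
    funext i
    have h2 : (Fr *ᵥ u) i = ((Fc *ᵥ x) i).re := by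
      simp only [Matrix.mulVec, dotProduct, Complex.re_sum]
      apply Finset.sum_congr rfl
      intro j _
      rw [show Fc i j = ((F i j : ℤ) : ℂ) from rfl, show Fr i j = ((F i j : ℤ) : ℝ) from rfl]
      simp [Complex.mul_re, hu]
    rw [h2, hFcx]
  have hFrv : Fr *ᵥ v = v := by
    funext i
    have h2 : (Fr *ᵥ v) i = ((Fc *ᵥ x) i).im := by
      simp only [Matrix.mulVec, dotProduct, Complex.im_sum]
      apply Finset.sum_congr rfl
      intro j _
      rw [show Fc i j = ((F i j : ℤ) : ℂ) from rfl, show Fr i j = ((F i j : ℤ) : ℝ) from rfl]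
      simp [Complex.mul_im, hv]
    rw [h2, hFcx]
  -- inner products of u and v
  set Buu : ℝ := u ⬝ᵥ Gr *ᵥ u with hBuu
  set Bvv : ℝ := v ⬝ᵥ Gr *ᵥ v with hBvv
  set Buv : ℝ := u ⬝ᵥ Gr *ᵥ v with hBuv
  set Bvu : ℝ := v ⬝ᵥ Gr *ᵥ u with hBvu
  have hsymuv : Buv = Bvu := bilin_symm Gr hGrsymm u v
  have hsum : x = (fun i => ((u i : ℝ) : ℂ)) + Complex.I • (fun i => ((v i : ℝ) : ℂ)) := by
    funext i
    simp only [Pi.add_apply, Pi.smul_apply, smul_eq_mul, hu, hv]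
    rw [mul_comm, Complex.re_add_im]
  have hstarx : star x = (fun i => ((u i : ℝ) : ℂ)) - Complex.I • (fun i => ((v i : ℝ) : ℂ)) := by
    funext i
    simp only [Pi.star_apply, Pi.sub_apply, Pi.smul_apply, smul_eq_mul, hu, hv]
    apply Complex.ext <;> simp
  have hxxd : x ⬝ᵥ Gc *ᵥ x = 0 := by rw [← Matrix.toBilin'_apply']; exact hxx
  have hxbd : x ⬝ᵥ Gc *ᵥ (star x) = (ρ : ℂ) := by rw [← Matrix.toBilin'_apply']; exact hxxbar
  have hGcGr : Gc = Gr.map Complex.ofRealHom := mapZC G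
  have hcast : ∀ a b : Fin n → ℝ,
      (fun i => ((a i : ℝ) : ℂ)) ⬝ᵥ Gc *ᵥ (fun i => ((b i : ℝ) : ℂ)) = ((a ⬝ᵥ Gr *ᵥ b : ℝ) : ℂ) := by
    intro a b
    rw [hGcGr, ← castdotRC]
  have hexp1 : ((Buu - Bvv : ℝ) : ℂ) + ((Buv + Bvu : ℝ) : ℂ) * Complex.I = 0 := by
    rw [← hxxd]
    conv_rhs => rw [hsum]
    simp only [add_dotProduct, dotProduct_add, Matrix.mulVec_add, Matrix.mulVec_smul,
      smul_dotProduct, dotProduct_smul, smul_eq_mul]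
    rw [hcast u u, hcast u v, hcast v u, hcast v v]
    push_cast
    linear_combination (-(Bvv : ℂ)) * Complex.I_mul_I
  have hexp2 : ((Buu + Bvv : ℝ) : ℂ) + ((Bvu - Buv : ℝ) : ℂ) * Complex.I = (ρ : ℂ) := by
    rw [← hxbd]
    conv_rhs => rw [hstarx, hsum]
    simp only [add_dotProduct, sub_dotProduct, dotProduct_add, dotProduct_sub,
      Matrix.mulVec_add, Matrix.mulVec_sub, Matrix.mulVec_smul,
      smul_dotProduct, dotProduct_smul, smul_eq_mul]
    rw [hcast u u, hcast u v, hcast v u, hcast v v]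
    push_cast
    linear_combination ((Bvv : ℂ)) * Complex.I_mul_I
  have hre1 : Buu - Bvv = 0 := by
    have h := congrArg Complex.re hexp1
    simpa using h
  have hre2 : Buu + Bvv = ρ := by
    have h := congrArg Complex.re hexp2
    simpa using h
  have him1 : Buv + Bvu = 0 := by
    have h := congrArg Complex.im hexp1
    simpa using h
  have hBuuρ : Buu = ρ / 2 := by linarith
  have hBvvρ : Bvv = ρ / 2 := by linarith
  have hBuv0 : Buv = 0 := by linarith
  have hBvu0 : Bvu = 0 := by linarith
  have e1 : u ⬝ᵥ Gr *ᵥ u = ρ/2 := by rw [← hBuu]; exact hBuuρ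
  have e2 : v ⬝ᵥ Gr *ᵥ v = ρ/2 := by rw [← hBvv]; exact hBvvρ
  have e3 : u ⬝ᵥ Gr *ᵥ v = 0 := by rw [← hBuv]; exact hBuv0
  have e4 : v ⬝ᵥ Gr *ᵥ u = 0 := by rw [← hBvu]; exact hBvu0
  have hinvR : ∀ a b : Fin n → ℝ, (Fr *ᵥ a) ⬝ᵥ Gr *ᵥ (Fr *ᵥ b) = a ⬝ᵥ Gr *ᵥ b :=
    fun a b => bilin_inv hFisoR a b
  have himgker : ∀ (w z : Fin n → ℝ), Fr *ᵥ z = z → (Dr *ᵥ w) ⬝ᵥ Gr *ᵥ z = 0 := by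
    intro w z hz
    rw [hDrFr, Matrix.sub_mulVec, Matrix.one_mulVec, sub_dotProduct,
      show (Fr *ᵥ w) ⬝ᵥ Gr *ᵥ z = (Fr *ᵥ w) ⬝ᵥ Gr *ᵥ (Fr *ᵥ z) from by rw [hz], hinvR, sub_self]
  have hβfromD : βr = ((g : ℤ) : ℝ)⁻¹ • (Dr *ᵥ Pi.single k (1 : ℝ)) := by
    funext i
    simp only [Matrix.mulVec_single_one, Matrix.col_apply, Pi.smul_apply, smul_eq_mul, mul_one]
    rw [show Dr i k = ((D i k : ℤ) : ℝ) from rfl,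
      show ((D i k : ℤ) : ℝ) = ((g : ℤ) : ℝ) * ((β i : ℤ) : ℝ) from by
        exact_mod_cast congrArg (Int.cast : ℤ → ℝ) (hckβ i),
      inv_mul_cancel_left₀ (show ((g : ℤ) : ℝ) ≠ 0 from by exact_mod_cast hgne)]
  have hβu : βr ⬝ᵥ Gr *ᵥ u = 0 := by
    rw [hβfromD, smul_dotProduct, himgker (Pi.single k 1) u hFru, smul_eq_mul, mul_zero]
  have hβv : βr ⬝ᵥ Gr *ᵥ v = 0 := by
    rw [hβfromD, smul_dotProduct, himgker (Pi.single k 1) v hFrv, smul_eq_mul, mul_zero]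
  have hβu' : u ⬝ᵥ Gr *ᵥ βr = 0 := by rw [bilin_symm Gr hGrsymm]; exact hβu
  have hβv' : v ⬝ᵥ Gr *ᵥ βr = 0 := by rw [bilin_symm Gr hGrsymm]; exact hβv
  -- the positivity contradiction
  have hposcon : ∀ w' : Fin n → ℝ, u ⬝ᵥ Gr *ᵥ w' = 0 → v ⬝ᵥ Gr *ᵥ w' = 0 →
      0 < w' ⬝ᵥ Gr *ᵥ w' → False := by
    intro w' h1 h2 h3
    have h1' : w' ⬝ᵥ Gr *ᵥ u = 0 := by rw [bilin_symm Gr hGrsymm]; exact h1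
    have h2' : w' ⬝ᵥ Gr *ᵥ v = 0 := by rw [bilin_symm Gr hGrsymm]; exact h2
    set b : Fin 3 → (Fin n → ℝ) := ![u, v, w'] with hb
    have hquad : ∀ c : Fin 3 → ℝ,
        (∑ i2, c i2 • b i2) ⬝ᵥ Gr *ᵥ (∑ i2, c i2 • b i2)
          = (c 0 ^ 2 + c 1 ^ 2) * (ρ/2) + c 2 ^ 2 * (w' ⬝ᵥ Gr *ᵥ w') := by
      intro c
      rw [Fin.sum_univ_three]
      simp only [hb, Matrix.cons_val_zero, Matrix.cons_val_one, Matrix.head_cons,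
        Matrix.cons_val_two, Matrix.tail_cons]
      simp only [add_dotProduct, dotProduct_add, Matrix.mulVec_add, Matrix.mulVec_smul,
        smul_dotProduct, dotProduct_smul, smul_eq_mul]
      rw [e1, e2, e3, e4, h1, h2, h1', h2']
      ring
    have hindep : LinearIndependent ℝ b := by
      rw [Fintype.linearIndependent_iff]
      intro c hc
      have hq := hquad c
      rw [hc, zero_dotProduct] at hq
      have key : ∀ a : ℝ, a ^ 2 ≤ 0 → a = 0 := fun a ha =>
        (pow_eq_zero_iff two_ne_zero).mp (le_antisymm ha (sq_nonneg a))
      have hρ2 : (0:ℝ) < ρ/2 := by linarith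
      have m0 := mul_nonneg (sq_nonneg (c 0)) hρ2.le
      have m1 := mul_nonneg (sq_nonneg (c 1)) hρ2.le
      have m2 := mul_nonneg (sq_nonneg (c 2)) h3.le
      have hc0 : c 0 = 0 := key _ (by nlinarith)
      have hc1 : c 1 = 0 := key _ (by nlinarith)
      have hc2 : c 2 = 0 := key _ (by nlinarith)
      intro i
      fin_cases i <;> assumption
    have hpos : ∀ y ∈ Submodule.span ℝ (Set.range b), y ≠ 0 →
        0 < Matrix.toBilin' Gr y y := by
      intro y hy hyne
      obtain ⟨c, hc⟩ := (Submodule.mem_span_range_iff_exists_fun ℝ).mp hy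
      rw [Matrix.toBilin'_apply', ← hc, hquad c]
      have hcne : ¬ (c 0 = 0 ∧ c 1 = 0 ∧ c 2 = 0) := by
        rintro ⟨a0, a1, a2⟩
        apply hyne
        rw [← hc, Fin.sum_univ_three, a0, a1, a2]
        simp
      by_contra hle0
      push_neg at hle0
      have key : ∀ a : ℝ, a ^ 2 ≤ 0 → a = 0 := fun a ha =>
        (pow_eq_zero_iff two_ne_zero).mp (le_antisymm ha (sq_nonneg a))
      have hρ2 : (0:ℝ) < ρ/2 := by linarith
      have m0 := mul_nonneg (sq_nonneg (c 0)) hρ2.le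
      have m1 := mul_nonneg (sq_nonneg (c 1)) hρ2.le
      have m2 := mul_nonneg (sq_nonneg (c 2)) h3.le
      have hc0 : c 0 = 0 := key _ (by nlinarith)
      have hc1 : c 1 = 0 := key _ (by nlinarith)
      have hc2 : c 2 = 0 := key _ (by nlinarith)
      exact hcne ⟨hc0, hc1, hc2⟩
    have hle := hsig_le (Submodule.span ℝ (Set.range b)) hpos
    rw [finrank_span_eq_card hindep] at hle
    simp at hle
  have hβzero : βr ⬝ᵥ Gr *ᵥ βr = 0 → False := by
    intro hz
    obtain ⟨w₀, hw₀⟩ :=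
      (Matrix.nondegenerate_of_det_ne_zero hGrnd).exists_not_ortho_of_ne_zero hβrne
    set a1 : ℝ := (u ⬝ᵥ Gr *ᵥ w₀) / (ρ/2) with ha1
    set a2 : ℝ := (v ⬝ᵥ Gr *ᵥ w₀) / (ρ/2) with ha2
    set γ : Fin n → ℝ := w₀ - a1 • u - a2 • v with hγ
    have hρ2 : (ρ/2) ≠ 0 := by positivity
    have hug : u ⬝ᵥ Gr *ᵥ γ = 0 := by
      rw [hγ]
      simp only [Matrix.mulVec_sub, dotProduct_sub, Matrix.mulVec_smul, dotProduct_smul,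
        smul_eq_mul]
      rw [e1, e3, ha1]
      field_simp
      ring
    have hvg : v ⬝ᵥ Gr *ᵥ γ = 0 := by
      rw [hγ]
      simp only [Matrix.mulVec_sub, dotProduct_sub, Matrix.mulVec_smul, dotProduct_smul,
        smul_eq_mul]
      rw [e2, e4, ha2]
      field_simp
      ring
    have hβγ : βr ⬝ᵥ Gr *ᵥ γ = βr ⬝ᵥ Gr *ᵥ w₀ := by
      rw [hγ]
      simp only [Matrix.mulVec_sub, dotProduct_sub, Matrix.mulVec_smul, dotProduct_smul,
        smul_eq_mul]
      rw [hβu, hβv]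
      ring
    set s : ℝ := (1 - γ ⬝ᵥ Gr *ᵥ γ) / (2 * (βr ⬝ᵥ Gr *ᵥ w₀)) with hs
    have hγβ : γ ⬝ᵥ Gr *ᵥ βr = βr ⬝ᵥ Gr *ᵥ w₀ := by
      rw [bilin_symm Gr hGrsymm]; exact hβγ
    apply hposcon (s • βr + γ)
    · simp only [Matrix.mulVec_add, dotProduct_add, Matrix.mulVec_smul, dotProduct_smul,
        smul_eq_mul]
      rw [hβu', hug]
      ring
    · simp only [Matrix.mulVec_add, dotProduct_add, Matrix.mulVec_smul, dotProduct_smul,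
        smul_eq_mul]
      rw [hβv', hvg]
      ring
    · have hval : (s • βr + γ) ⬝ᵥ Gr *ᵥ (s • βr + γ) = 1 := by
        simp only [Matrix.mulVec_add, dotProduct_add, add_dotProduct, Matrix.mulVec_smul,
          dotProduct_smul, smul_dotProduct, smul_eq_mul]
        rw [hz, hβγ, hγβ, hs]
        field_simp
        ring
      rw [hval]
      norm_num
  have hβneg : βr ⬝ᵥ Gr *ᵥ βr < 0 := by
    rcases lt_trichotomy (βr ⬝ᵥ Gr *ᵥ βr) 0 with h | h | h
    · exact h
    · exact absurd h hβzero
    · exact absurd h (fun hh => hposcon βr hβu' hβv' hh)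
  -- F acts on βr as ±1, and the minus sign holds
  set q0 : ℝ := ∑ j, r j * βr j with hq0def
  have hFβr : Fr *ᵥ βr = (1 + q0) • βr := by
    have h1 : Dr *ᵥ βr = q0 • βr := hDrw βr
    rw [hDrFr, Matrix.sub_mulVec, Matrix.one_mulVec] at h1
    have h2 := eq_add_of_sub_eq h1
    rw [h2, add_smul, one_smul, add_comm]
  have hc2 : (1 + q0) * (1 + q0) = 1 := by
    have h1 := bilin_inv hFisoR βr βr
    rw [hFβr, smul_dotProduct, Matrix.mulVec_smul, dotProduct_smul, smul_eq_mul,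
      smul_eq_mul] at h1
    have h3 : ((1 + q0) * (1 + q0) - 1) * (βr ⬝ᵥ Gr *ᵥ βr) = 0 := by linear_combination h1
    rcases mul_eq_zero.mp h3 with h | h
    · linarith
    · exact absurd h hβneg.ne
  have hcm : (1 + q0) = -1 := by
    rcases mul_self_eq_one_iff.mp hc2 with h | h
    · exfalso
      have hfix : Fr *ᵥ βr = βr := by rw [hFβr, h, one_smul]
      have h0 : βr ⬝ᵥ Gr *ᵥ βr = 0 := by
        nth_rewrite 1 [hβfromD]
        rw [smul_dotProduct, himgker (Pi.single k 1) βr hfix, smul_eq_mul, mul_zero]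
      exact hβneg.ne h0
    · exact h
  have hFβrneg : Fr *ᵥ βr = -βr := by rw [hFβr, hcm, neg_one_smul]
  refine ⟨β, ?_, ?_, ?_, ?_⟩
  · -- primitivity
    intro m w hmw
    have hdvd : (g * m) ∣ g := by
      rw [hg]
      apply Finset.dvd_gcd
      intro i _
      exact ⟨w i, by rw [hckβ i, show β i = m * w i from by rw [hmw]; rfl]; ring⟩
    obtain ⟨t, ht⟩ := hdvd
    refine IsUnit.of_mul_eq_one t ?_
    have h2 : g * (m * t) = g * 1 := by rw [mul_one]; rw [mul_assoc] at ht; linarith [ht]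
    exact mul_left_cancel₀ hgne h2
  · -- β² < 0
    rw [Matrix.toBilin'_apply']
    have hcast2 : ((β ⬝ᵥ G *ᵥ β : ℤ) : ℝ) = βr ⬝ᵥ Gr *ᵥ βr := by
      simpa using castdot (Int.castRingHom ℝ) G β β
    have : ((β ⬝ᵥ G *ᵥ β : ℤ) : ℝ) < 0 := by rw [hcast2]; exact hβneg
    exact_mod_cast this
  · -- F is the identity on β^⊥
    intro w hw
    rw [Matrix.toBilin'_apply'] at hw
    set wr : Fin n → ℝ := fun i => ((w i : ℤ) : ℝ) with hwr
    have hwr0 : βr ⬝ᵥ Gr *ᵥ wr = 0 := by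
      have h1 := castdot (Int.castRingHom ℝ) G β w
      rw [hw] at h1
      simpa using h1.symm
    have hFw : βr ⬝ᵥ Gr *ᵥ (Fr *ᵥ wr) = 0 := by
      have h1 := bilin_inv hFisoR βr wr
      rw [hFβrneg, neg_dotProduct, hwr0] at h1
      linarith
    have hdw : βr ⬝ᵥ Gr *ᵥ (Dr *ᵥ wr) = 0 := by
      rw [hDrFr, Matrix.sub_mulVec, Matrix.one_mulVec, Matrix.mulVec_sub, dotProduct_sub,
        hFw, hwr0, sub_zero]
    have hq : (∑ j, r j * wr j) * (βr ⬝ᵥ Gr *ᵥ βr) = 0 := by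
      rw [hDrw wr, Matrix.mulVec_smul, dotProduct_smul, smul_eq_mul] at hdw
      exact hdw
    have hq0' : (∑ j, r j * wr j) = 0 :=
      (mul_eq_zero.mp hq).resolve_right hβneg.ne
    have hDw0 : Dr *ᵥ wr = 0 := by rw [hDrw wr, hq0', zero_smul]
    have hFrw : Fr *ᵥ wr = wr := by
      rw [hDrFr, Matrix.sub_mulVec, Matrix.one_mulVec, sub_eq_zero] at hDw0
      exact hDw0
    funext i
    have h1 := RingHom.map_mulVec (Int.castRingHom ℝ) F w i
    rw [show ((Int.castRingHom ℝ) ∘ w) = wr from rfl,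
      show F.map (Int.castRingHom ℝ) = Fr from rfl, hFrw] at h1
    have h2 : (((F *ᵥ w) i : ℤ) : ℝ) = ((w i : ℤ) : ℝ) := by
      rw [show (((F *ᵥ w) i : ℤ) : ℝ) = (Int.castRingHom ℝ) ((F *ᵥ w) i) from rfl, h1]
    exact_mod_cast h2
  · -- F β = -β
    funext i
    have h1 := RingHom.map_mulVec (Int.castRingHom ℝ) F β i
    rw [show ((Int.castRingHom ℝ) ∘ β) = βr from rfl,
      show F.map (Int.castRingHom ℝ) = Fr from rfl, hFβrneg] at h1
    have h2 : (((F *ᵥ β) i : ℤ) : ℝ) = ((- β i : ℤ) : ℝ) := by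
      rw [show (((F *ᵥ β) i : ℤ) : ℝ) = (Int.castRingHom ℝ) ((F *ᵥ β) i) from rfl, h1]
      push_cast
      rfl
    exact_mod_cast h2

lemma part1 (n : ℕ) (hn : 3 ≤ n)
    (Gc Fc : Matrix (Fin n) (Fin n) ℂ) (hGsymm : Gc.IsSymm) (hGnd : Gc.det ≠ 0)
    (hFiso : Fc.transpose * Gc * Fc = Gc)
    (lam : ℂ) (E : Submodule ℂ (Fin n → ℂ))
    (hE : ∀ e ∈ E, Fc *ᵥ e = lam • e)
    (hcodim : Module.finrank ℂ E = n - 1)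
    (x : Fin n → ℂ) (hxE : x ∈ E)
    (ρ : ℂ) (hρ : ρ ≠ 0) (hxxbar : x ⬝ᵥ Gc *ᵥ (star x) = ρ) :
    lam = 1 ∨ lam = -1 := by
  by_contra hlam
  push_neg at hlam
  have hlam2 : lam * lam ≠ 1 := fun h => (mul_self_eq_one_iff.mp h).elim hlam.1 hlam.2
  have hB0 : ∀ e ∈ E, ∀ e' ∈ E, e ⬝ᵥ Gc *ᵥ e' = 0 := by
    intro e he e' he'
    have h1 : (Fc *ᵥ e) ⬝ᵥ Gc *ᵥ (Fc *ᵥ e') = e ⬝ᵥ Gc *ᵥ e' := bilin_inv hFiso e e'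
    rw [hE e he, hE e' he', smul_dotProduct, mulVec_smul, dotProduct_smul,
      smul_eq_mul, smul_eq_mul] at h1
    have h2 : (lam * lam - 1) * (e ⬝ᵥ Gc *ᵥ e') = 0 := by linear_combination h1
    exact (mul_eq_zero.mp h2).resolve_left (sub_ne_zero.mpr hlam2)
  set xb := star x with hxb
  have hxnotE : xb ∉ E := fun h => hρ (hxxbar ▸ hB0 x hxE xb h)
  set ψ : (Fin n → ℂ) →ₗ[ℂ] ℂ := Matrix.toBilin' Gc xb with hψ
  have hψap : ∀ w, ψ w = xb ⬝ᵥ Gc *ᵥ w := fun w => Matrix.toBilin'_apply' Gc xb w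
  have hK : n - 1 ≤ Module.finrank ℂ (LinearMap.ker ψ) := by
    have h1 := LinearMap.finrank_range_add_finrank_ker ψ
    have h2 : Module.finrank ℂ (LinearMap.range ψ) ≤ 1 := by
      simpa [Module.finrank_self] using Submodule.finrank_le (LinearMap.range ψ)
    rw [Module.finrank_fin_fun] at h1
    omega
  have hinf : 0 < Module.finrank ℂ (E ⊓ LinearMap.ker ψ : Submodule ℂ (Fin n → ℂ)) := by
    have h1 := Submodule.finrank_sup_add_finrank_inf_eq E (LinearMap.ker ψ)
    have h2 : Module.finrank ℂ (E ⊔ LinearMap.ker ψ : Submodule ℂ (Fin n → ℂ)) ≤ n := by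
      simpa [Module.finrank_fin_fun] using
        Submodule.finrank_le (E ⊔ LinearMap.ker ψ : Submodule ℂ (Fin n → ℂ))
    omega
  obtain ⟨e₀, he₀mem, he₀⟩ : ∃ e₀ ∈ (E ⊓ LinearMap.ker ψ : Submodule ℂ (Fin n → ℂ)), e₀ ≠ 0 := by
    rw [← Submodule.ne_bot_iff]
    intro h
    rw [h, finrank_bot] at hinf
    omega
  have hsup : E ⊔ (ℂ ∙ xb) = ⊤ := by
    apply Submodule.eq_top_of_finrank_eq
    have hlt : E < E ⊔ (ℂ ∙ xb) := by
      refine lt_of_le_of_ne le_sup_left (fun h => hxnotE ?_)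
      rw [h]
      exact Submodule.mem_sup_right (Submodule.mem_span_singleton_self xb)
    have h1 := Submodule.finrank_lt_finrank_of_lt hlt
    have h2 : Module.finrank ℂ (E ⊔ (ℂ ∙ xb) : Submodule ℂ (Fin n → ℂ)) ≤ n := by
      simpa [Module.finrank_fin_fun] using
        Submodule.finrank_le (E ⊔ (ℂ ∙ xb) : Submodule ℂ (Fin n → ℂ))
    rw [Module.finrank_fin_fun]
    omega
  apply he₀
  apply (Matrix.nondegenerate_of_det_ne_zero hGnd).eq_zero_of_ortho
  intro w
  have hw : w ∈ E ⊔ (ℂ ∙ xb) := hsup ▸ Submodule.mem_top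
  obtain ⟨e, he, s, hs, rfl⟩ := Submodule.mem_sup.mp hw
  obtain ⟨t, rfl⟩ := Submodule.mem_span_singleton.mp hs
  have hE0 : e₀ ∈ E := he₀mem.1
  have hKer : ψ e₀ = 0 := he₀mem.2
  rw [mulVec_add, dotProduct_add, hB0 e₀ hE0 e he, mulVec_smul, dotProduct_smul]
  have : e₀ ⬝ᵥ Gc *ᵥ xb = 0 := by
    rw [bilin_symm Gc hGsymm, ← hψap, hKer]
  rw [this, smul_zero, add_zero]



/-!
STATEMENT 18. Let `Λ = Fin n → ℤ` be an even lattice with Gram matrix `G`, nondegenerate,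
of signature `(2, n-2)` with `n - 2 ≥ 1` (expressed by: every positive definite real
subspace has dimension at most `2`, and some positive definite real subspace has
dimension `2`).  Let `f` be an isometry of `Λ` with matrix `F` (so `Fᵀ G F = G`), and
suppose that for some eigenvalue `λ` of `f ⊗ ℂ` the eigenspace `V_λ` has complex
codimension `1` and contains a vector `x` with `x·x = 0` and `x·x̄ > 0`.  Then `λ = ±1`,
and if `λ = 1` there exists a primitive `β ∈ Λ` with `β² < 0` such that `f` is the
identity on `β^⊥` and `f(β) = -β`, i.e. `f` is the reflection `r_β`.
-/
theorem stmt_18 (n : ℕ) (hn : 3 ≤ n)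
    (G : Matrix (Fin n) (Fin n) ℤ) (hGsymm : G.IsSymm) (hGeven : ∀ i, 2 ∣ G i i)
    (hGnd : G.det ≠ 0)
    (hsig_le : ∀ W : Submodule ℝ (Fin n → ℝ),
      (∀ v ∈ W, v ≠ 0 → 0 < Matrix.toBilin' (G.map (Int.cast : ℤ → ℝ)) v v) →
        Module.finrank ℝ W ≤ 2)
    (hsig_ex : ∃ W : Submodule ℝ (Fin n → ℝ),
      (∀ v ∈ W, v ≠ 0 → 0 < Matrix.toBilin' (G.map (Int.cast : ℤ → ℝ)) v v) ∧
        Module.finrank ℝ W = 2)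
    (F : Matrix (Fin n) (Fin n) ℤ) (hFiso : F.transpose * G * F = G)
    (lam : ℂ)
    (E : Submodule ℂ (Fin n → ℂ))
    (hE : E = Module.End.eigenspace
      (Matrix.toLin' (F.map (Int.cast : ℤ → ℂ))) lam)
    (hcodim : Module.finrank ℂ E = n - 1)
    (x : Fin n → ℂ) (hxE : x ∈ E)
    (hxx : Matrix.toBilin' (G.map (Int.cast : ℤ → ℂ)) x x = 0)
    (hxxbar : ∃ ρ : ℝ, 0 < ρ ∧
      Matrix.toBilin' (G.map (Int.cast : ℤ → ℂ)) x (star x) = (ρ : ℂ)) :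
    (lam = 1 ∨ lam = -1) ∧
      (lam = 1 → ∃ β : Fin n → ℤ,
        (∀ (m : ℤ) (v : Fin n → ℤ), β = m • v → IsUnit m) ∧
        Matrix.toBilin' G β β < 0 ∧
        (∀ v : Fin n → ℤ, Matrix.toBilin' G β v = 0 → F.mulVec v = v) ∧
        F.mulVec β = -β) := by
  classical
  obtain ⟨ρ, hρpos, hρeq⟩ := hxxbar
  have hGcsymm : (G.map (Int.cast : ℤ → ℂ)).IsSymm := by
    rw [Matrix.IsSymm, ← Matrix.transpose_map, hGsymm]
  have hGcnd : (G.map (Int.cast : ℤ → ℂ)).det ≠ 0 := by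
    have h := RingHom.map_det (Int.castRingHom ℂ) G
    rw [RingHom.mapMatrix_apply] at h
    rw [show G.map (Int.cast : ℤ → ℂ) = G.map (⇑(Int.castRingHom ℂ)) from rfl, ← h,
      eq_intCast (Int.castRingHom ℂ)]
    exact_mod_cast hGnd
  have hFisoC : (F.map (Int.cast : ℤ → ℂ)).transpose * G.map (Int.cast : ℤ → ℂ)
      * F.map (Int.cast : ℤ → ℂ) = G.map (Int.cast : ℤ → ℂ) := by
    rw [← Matrix.transpose_map]
    rw [show Fᵀ.map (Int.cast : ℤ → ℂ) = Fᵀ.map (Int.castRingHom ℂ) from rfl,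
      show F.map (Int.cast : ℤ → ℂ) = F.map (Int.castRingHom ℂ) from rfl,
      show G.map (Int.cast : ℤ → ℂ) = G.map (Int.castRingHom ℂ) from rfl,
      ← Matrix.map_mul, ← Matrix.map_mul, hFiso]
  have hEe : ∀ e ∈ E, (F.map (Int.cast : ℤ → ℂ)) *ᵥ e = lam • e := by
    intro e he
    have h := Module.End.mem_eigenspace_iff.mp (hE ▸ he)
    rwa [Matrix.toLin'_apply] at h
  have h1 : lam = 1 ∨ lam = -1 :=
    part1 n hn _ _ hGcsymm hGcnd hFisoC lam E hEe hcodim x hxE (ρ : ℂ)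
      (Complex.ofReal_ne_zero.mpr hρpos.ne')
      (by rw [← Matrix.toBilin'_apply']; exact hρeq)
  refine ⟨h1, fun hl1 => ?_⟩
  exact part2 n hn G hGsymm hGnd hsig_le F hFiso E (hl1 ▸ hE) hcodim x hxE hxx ρ hρpos hρeq
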